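/- Let N ≥ 1, λ_1,…,λ_N ≥ 0 with Σ_k λ_k = 1, S0 > 0, K > 0, μ ∈ ℝ, t > 0, and for each k let ℓ^k be the lognormal density with initial value S0, drift μ, time t and term volatility V_k > 0. Then ∫₀^∞ max(x − K, 0)·(Σ_k λ_k ℓ^k(x)) dx = Σ_k λ_k · (S0·e^{μt}·Φ(d₁^k) − K·Φ(d₂^k)), where Φ is the standard normal cumulative distribution function, d₁^k = (ln(S0/K) + μt + V_k²/2)/V_k and d₂^k = d₁^k − V_k. That is, under the lognormal mixture dynamics model, European call option prices are linear convex combinations of Black–Scholes prices with weights λ_k. -/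

import Mathlib

open Real MeasureTheory Set

/-- The standard normal cumulative distribution function. -/
noncomputable def stdNormalCDF (y : ℝ) : ℝ :=
  ∫ u in Set.Iic y, (1 / Real.sqrt (2 * Real.pi)) * Real.exp (-u ^ 2 / 2)

lemma gauss_integrable (m V : ℝ) (hV : 0 < V) :
    Integrable (fun u : ℝ => Real.exp (-(u - m) ^ 2 / (2 * V ^ 2))) := by
  have hb : (0:ℝ) < (2 * V ^ 2)⁻¹ := by positivity
  have h := (integrable_exp_neg_mul_sq hb).comp_sub_right m
  convert h using 2 with u
  ring

lemma gauss_tail (m V a : ℝ) (hV : 0 < V) :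
    ∫ u in Set.Ioi a, (1 / (Real.sqrt (2 * Real.pi) * V)) *
      Real.exp (-(u - m) ^ 2 / (2 * V ^ 2)) = stdNormalCDF ((m - a) / V) := by
  have hVne : V ≠ 0 := ne_of_gt hV
  set c := (m - a) / V with hc
  set f : ℝ → ℝ := fun v => m - V * v with hf
  have himg : f '' Set.Iic c = Set.Ici a := by
    ext y
    constructor
    · rintro ⟨v, hv, rfl⟩
      simp only [Set.mem_Iic] at hv
      simp only [hf, Set.mem_Ici]
      have : V * v ≤ V * c := mul_le_mul_of_nonneg_left hv hV.le
      have hvc : V * c = m - a := by rw [hc]; field_simp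
      linarith
    · intro hy
      simp only [Set.mem_Ici] at hy
      refine ⟨(m - y) / V, ?_, by simp [hf]; field_simp; ring⟩
      simp only [Set.mem_Iic, hc]
      gcongr
  have hderiv : ∀ v ∈ Set.Iic c, HasDerivWithinAt f (-V) (Set.Iic c) v := by
    intro v _
    simpa using ((hasDerivAt_id v).const_mul V).const_sub m |>.hasDerivWithinAt
  have hinj : Set.InjOn f (Set.Iic c) := by
    intro x _ y _ h
    simp only [hf] at h
    have : V * x = V * y := by linarith
    exact mul_left_cancel₀ hVne this
  have := integral_image_eq_integral_abs_deriv_smul measurableSet_Iic hderiv hinj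
    (fun u => (1 / (Real.sqrt (2 * Real.pi) * V)) * Real.exp (-(u - m) ^ 2 / (2 * V ^ 2)))
  rw [himg] at this
  rw [← integral_Ici_eq_integral_Ioi, this, stdNormalCDF]
  congr 1
  ext v
  rw [smul_eq_mul, abs_neg, abs_of_pos hV, hf]
  have h1 : -(m - V * v - m) ^ 2 / (2 * V ^ 2) = -v ^ 2 / 2 := by
    field_simp
    ring
  rw [h1]
  field_simp

lemma bs_single (S0 K μ t V : ℝ) (hS0 : 0 < S0) (hK : 0 < K) (hV : 0 < V) :
    ∫ x in Set.Ioi (0:ℝ), max (x - K) 0 * ((1 / (Real.sqrt (2 * Real.pi) * x * V)) *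
        Real.exp (-(Real.log (x / S0) - μ * t + V ^ 2 / 2) ^ 2 / (2 * V ^ 2))) =
      S0 * Real.exp (μ * t) * stdNormalCDF ((Real.log (S0 / K) + μ * t + V ^ 2 / 2) / V)
        - K * stdNormalCDF ((Real.log (S0 / K) + μ * t + V ^ 2 / 2) / V - V) := by
  have hVne : V ≠ 0 := ne_of_gt hV
  set θ : ℝ := Real.log S0 + μ * t - V ^ 2 / 2 with hθ
  set a : ℝ := Real.log K with ha
  set g : ℝ → ℝ := fun u => (1 / (Real.sqrt (2 * Real.pi) * V)) *
    Real.exp (-(u - θ) ^ 2 / (2 * V ^ 2)) with hg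
  set g2 : ℝ → ℝ := fun u => (1 / (Real.sqrt (2 * Real.pi) * V)) *
    Real.exp (-(u - (θ + V ^ 2)) ^ 2 / (2 * V ^ 2)) with hg2
  -- change of variables x = exp u
  have himg : Real.exp '' Set.univ = Set.Ioi (0:ℝ) := by
    rw [Set.image_univ, Real.range_exp]
  have hcv := integral_image_eq_integral_abs_deriv_smul MeasurableSet.univ
    (fun x _ => (Real.hasDerivAt_exp x).hasDerivWithinAt) Real.exp_injective.injOn
    (fun x => max (x - K) 0 * ((1 / (Real.sqrt (2 * Real.pi) * x * V)) *
        Real.exp (-(Real.log (x / S0) - μ * t + V ^ 2 / 2) ^ 2 / (2 * V ^ 2))))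
  rw [himg] at hcv
  rw [hcv, Measure.restrict_univ]
  -- pointwise: the integrand equals an indicator
  have hpt : ∀ u : ℝ, |Real.exp u| • (max (Real.exp u - K) 0 *
      ((1 / (Real.sqrt (2 * Real.pi) * Real.exp u * V)) *
        Real.exp (-(Real.log (Real.exp u / S0) - μ * t + V ^ 2 / 2) ^ 2 / (2 * V ^ 2)))) =
      Set.indicator (Set.Ioi a) (fun u => (Real.exp u - K) * g u) u := by
    intro u
    have he : (0:ℝ) < Real.exp u := Real.exp_pos u
    have hlog : Real.log (Real.exp u / S0) = u - Real.log S0 := by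
      rw [Real.log_div (ne_of_gt he) (ne_of_gt hS0), Real.log_exp]
    have hexp : -(Real.log (Real.exp u / S0) - μ * t + V ^ 2 / 2) ^ 2 / (2 * V ^ 2) =
        -(u - θ) ^ 2 / (2 * V ^ 2) := by rw [hlog, hθ]; ring_nf
    rw [smul_eq_mul, abs_of_pos he, hexp]
    by_cases hu : u ∈ Set.Ioi a
    · have hKe : K < Real.exp u := by
        rw [ha] at hu; calc K = Real.exp (Real.log K) := (Real.exp_log hK).symm
        _ < Real.exp u := Real.exp_lt_exp.mpr hu
      rw [Set.indicator_of_mem hu]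
      rw [max_eq_left (by linarith)]
      simp only [hg]
      field_simp
    · have hKe : Real.exp u ≤ K := by
        rw [ha, Set.mem_Ioi, not_lt] at hu
        calc Real.exp u ≤ Real.exp (Real.log K) := Real.exp_le_exp.mpr hu
        _ = K := Real.exp_log hK
      rw [Set.indicator_of_notMem hu, max_eq_right (by linarith)]
      ring
  simp_rw [hpt]
  rw [integral_indicator measurableSet_Ioi]
  -- rewrite (e^u - K) * g u as S0 e^{μt} g2 u - K * g u
  have hpt2 : ∀ u ∈ Set.Ioi a, (Real.exp u - K) * g u =
      S0 * Real.exp (μ * t) * g2 u - K * g u := by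
    intro u _
    have key : Real.exp u * Real.exp (-(u - θ) ^ 2 / (2 * V ^ 2)) =
        (S0 * Real.exp (μ * t)) * Real.exp (-(u - (θ + V ^ 2)) ^ 2 / (2 * V ^ 2)) := by
      have hS0e : S0 = Real.exp (Real.log S0) := (Real.exp_log hS0).symm
      rw [← Real.exp_add]
      conv_rhs => rw [hS0e, ← Real.exp_add, ← Real.exp_add]
      congr 1
      rw [hθ]; field_simp; ring
    simp only [hg, hg2]
    rw [sub_mul]
    rw [show Real.exp u * (1 / (Real.sqrt (2 * Real.pi) * V) *
        Real.exp (-(u - θ) ^ 2 / (2 * V ^ 2))) = 1 / (Real.sqrt (2 * Real.pi) * V) *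
        (Real.exp u * Real.exp (-(u - θ) ^ 2 / (2 * V ^ 2))) by ring, key]
    ring
  rw [setIntegral_congr_fun measurableSet_Ioi hpt2]
  have hi2 : IntegrableOn (fun u => S0 * Real.exp (μ * t) * g2 u) (Set.Ioi a) := by
    exact (((gauss_integrable (θ + V ^ 2) V hV).const_mul _).const_mul _).integrableOn
  have hi1 : IntegrableOn (fun u => K * g u) (Set.Ioi a) := by
    exact (((gauss_integrable θ V hV).const_mul _).const_mul _).integrableOn
  rw [integral_sub hi2 hi1]
  have e1 : (θ + V ^ 2 - a) / V = (Real.log (S0 / K) + μ * t + V ^ 2 / 2) / V := by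
    rw [hθ, ha, Real.log_div (ne_of_gt hS0) (ne_of_gt hK)]; ring_nf
  have e2 : (θ - a) / V = (Real.log (S0 / K) + μ * t + V ^ 2 / 2) / V - V := by
    rw [hθ, ha, Real.log_div (ne_of_gt hS0) (ne_of_gt hK)]; field_simp; ring
  have t1 : (∫ u in Set.Ioi a, S0 * Real.exp (μ * t) * g2 u) =
      S0 * Real.exp (μ * t) * stdNormalCDF ((Real.log (S0 / K) + μ * t + V ^ 2 / 2) / V) := by
    rw [integral_const_mul]
    congr 1
    rw [← e1]
    exact gauss_tail (θ + V ^ 2) V a hV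
  have t2 : (∫ u in Set.Ioi a, K * g u) =
      K * stdNormalCDF ((Real.log (S0 / K) + μ * t + V ^ 2 / 2) / V - V) := by
    rw [integral_const_mul]
    congr 1
    rw [← e2]
    exact gauss_tail θ V a hV
  rw [t1, t2]

lemma bs_integrable (S0 K μ t V : ℝ) (hS0 : 0 < S0) (hK : 0 < K) (hV : 0 < V) :
    IntegrableOn (fun x => max (x - K) 0 * ((1 / (Real.sqrt (2 * Real.pi) * x * V)) *
      Real.exp (-(Real.log (x / S0) - μ * t + V ^ 2 / 2) ^ 2 / (2 * V ^ 2)))) (Set.Ioi 0) := by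
  have hVne : V ≠ 0 := ne_of_gt hV
  set θ : ℝ := Real.log S0 + μ * t - V ^ 2 / 2 with hθ
  set a : ℝ := Real.log K with ha
  set g : ℝ → ℝ := fun u => (1 / (Real.sqrt (2 * Real.pi) * V)) *
    Real.exp (-(u - θ) ^ 2 / (2 * V ^ 2)) with hg
  set g2 : ℝ → ℝ := fun u => (1 / (Real.sqrt (2 * Real.pi) * V)) *
    Real.exp (-(u - (θ + V ^ 2)) ^ 2 / (2 * V ^ 2)) with hg2
  have himg : Real.exp '' Set.univ = Set.Ioi (0:ℝ) := by
    rw [Set.image_univ, Real.range_exp]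
  rw [← himg, integrableOn_image_iff_integrableOn_abs_deriv_smul MeasurableSet.univ
    (fun x _ => (Real.hasDerivAt_exp x).hasDerivWithinAt) Real.exp_injective.injOn]
  rw [integrableOn_univ]
  have hpt : ∀ u : ℝ, |Real.exp u| • (max (Real.exp u - K) 0 *
      ((1 / (Real.sqrt (2 * Real.pi) * Real.exp u * V)) *
        Real.exp (-(Real.log (Real.exp u / S0) - μ * t + V ^ 2 / 2) ^ 2 / (2 * V ^ 2)))) =
      Set.indicator (Set.Ioi a) (fun u => (Real.exp u - K) * g u) u := by
    intro u
    have he : (0:ℝ) < Real.exp u := Real.exp_pos u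
    have hlog : Real.log (Real.exp u / S0) = u - Real.log S0 := by
      rw [Real.log_div (ne_of_gt he) (ne_of_gt hS0), Real.log_exp]
    have hexp : -(Real.log (Real.exp u / S0) - μ * t + V ^ 2 / 2) ^ 2 / (2 * V ^ 2) =
        -(u - θ) ^ 2 / (2 * V ^ 2) := by rw [hlog, hθ]; ring_nf
    rw [smul_eq_mul, abs_of_pos he, hexp]
    by_cases hu : u ∈ Set.Ioi a
    · have hKe : K < Real.exp u := by
        rw [ha] at hu; calc K = Real.exp (Real.log K) := (Real.exp_log hK).symm
        _ < Real.exp u := Real.exp_lt_exp.mpr hu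
      rw [Set.indicator_of_mem hu]
      rw [max_eq_left (by linarith)]
      simp only [hg]
      field_simp
    · have hKe : Real.exp u ≤ K := by
        rw [ha, Set.mem_Ioi, not_lt] at hu
        calc Real.exp u ≤ Real.exp (Real.log K) := Real.exp_le_exp.mpr hu
        _ = K := Real.exp_log hK
      rw [Set.indicator_of_notMem hu, max_eq_right (by linarith)]
      ring
  simp_rw [hpt]
  rw [integrable_indicator_iff measurableSet_Ioi]
  have hpt2 : ∀ u ∈ Set.Ioi a, (Real.exp u - K) * g u =
      S0 * Real.exp (μ * t) * g2 u - K * g u := by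
    intro u _
    have key : Real.exp u * Real.exp (-(u - θ) ^ 2 / (2 * V ^ 2)) =
        (S0 * Real.exp (μ * t)) * Real.exp (-(u - (θ + V ^ 2)) ^ 2 / (2 * V ^ 2)) := by
      have hS0e : S0 = Real.exp (Real.log S0) := (Real.exp_log hS0).symm
      rw [← Real.exp_add]
      conv_rhs => rw [hS0e, ← Real.exp_add, ← Real.exp_add]
      congr 1
      rw [hθ]; field_simp; ring
    simp only [hg, hg2]
    rw [sub_mul]
    rw [show Real.exp u * (1 / (Real.sqrt (2 * Real.pi) * V) *
        Real.exp (-(u - θ) ^ 2 / (2 * V ^ 2))) = 1 / (Real.sqrt (2 * Real.pi) * V) *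
        (Real.exp u * Real.exp (-(u - θ) ^ 2 / (2 * V ^ 2))) by ring, key]
    ring
  have hi2 : IntegrableOn (fun u => S0 * Real.exp (μ * t) * g2 u) (Set.Ioi a) :=
    (((gauss_integrable (θ + V ^ 2) V hV).const_mul _).const_mul _).integrableOn
  have hi1 : IntegrableOn (fun u => K * g u) (Set.Ioi a) :=
    (((gauss_integrable θ V hV).const_mul _).const_mul _).integrableOn
  exact IntegrableOn.congr_fun (hi2.sub hi1) (fun u hu => (hpt2 u hu).symm) measurableSet_Ioi

/-- Under the lognormal mixture dynamics model, European call option prices are linear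
convex combinations of Black–Scholes prices with weights `lam k`. -/
theorem lognormal_mixture_call_price
    (N : ℕ) (hN : 1 ≤ N) (lam V : Fin N → ℝ)
    (S0 K μ t : ℝ) (hS0 : 0 < S0) (hK : 0 < K) (ht : 0 < t)
    (hlam : ∀ k, 0 ≤ lam k) (hsum : ∑ k, lam k = 1) (hV : ∀ k, 0 < V k) :
    ∫ x in Set.Ioi (0 : ℝ),
      max (x - K) 0 * (∑ k, lam k * ((1 / (Real.sqrt (2 * Real.pi) * x * V k)) *
        Real.exp (-(Real.log (x / S0) - μ * t + (V k) ^ 2 / 2) ^ 2 / (2 * (V k) ^ 2)))) =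
      ∑ k, lam k *
        (S0 * Real.exp (μ * t) *
            stdNormalCDF ((Real.log (S0 / K) + μ * t + (V k) ^ 2 / 2) / V k)
          - K * stdNormalCDF ((Real.log (S0 / K) + μ * t + (V k) ^ 2 / 2) / V k - V k)) := by
  have hrw : ∀ x : ℝ, max (x - K) 0 * (∑ k, lam k *
      ((1 / (Real.sqrt (2 * Real.pi) * x * V k)) *
        Real.exp (-(Real.log (x / S0) - μ * t + (V k) ^ 2 / 2) ^ 2 / (2 * (V k) ^ 2)))) =
      ∑ k, lam k * (max (x - K) 0 * ((1 / (Real.sqrt (2 * Real.pi) * x * V k)) *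
        Real.exp (-(Real.log (x / S0) - μ * t + (V k) ^ 2 / 2) ^ 2 / (2 * (V k) ^ 2)))) := by
    intro x
    rw [Finset.mul_sum]
    exact Finset.sum_congr rfl fun k _ => by ring
  simp_rw [hrw]
  rw [integral_finset_sum _ (fun k _ =>
    ((bs_integrable S0 K μ t (V k) hS0 hK (hV k)).const_mul (lam k)))]
  exact Finset.sum_congr rfl fun k _ => by
    rw [integral_const_mul, bs_single S0 K μ t (V k) hS0 hK (hV k)]
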